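/- Let X ∈ ℝ^{n×p} with rows x_1,…,x_n have full column rank, let m_1,…,m_n be positive reals, and let W(β) = diag(w_1(β),…,w_n(β)) with w_i(β) = exp(⟨x_i,β⟩)/(1+exp(⟨x_i,β⟩))^2 and M = diag(m_1,…,m_n). Then sup over unit vectors u ∈ ℝ^p of det(Xᵀ M W(r u) X) tends to 0 as r → ∞. -/

import Mathlib

open Real Matrix Finset Filter


noncomputable def wfun (z : ℝ) : ℝ := Real.exp z / (1 + Real.exp z) ^ 2

lemma wfun_nonneg (z : ℝ) : 0 ≤ wfun z := by
  unfold wfun; positivity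

lemma wfun_le_one (z : ℝ) : wfun z ≤ 1 := by
  unfold wfun
  rw [div_le_one (by positivity)]
  nlinarith [Real.exp_pos z]

lemma wfun_le_exp_neg_abs (z : ℝ) : wfun z ≤ Real.exp (-|z|) := by
  unfold wfun
  rcases le_or_gt 0 z with h | h
  · rw [abs_of_nonneg h, div_le_iff₀ (by positivity)]
    have hE : Real.exp (-z) * Real.exp z = 1 := by rw [← Real.exp_add]; simp
    nlinarith [Real.exp_pos z, Real.exp_pos (-z)]
  · rw [abs_of_neg h, neg_neg, div_le_iff₀ (by positivity)]
    nlinarith [Real.exp_pos z, mul_pos (Real.exp_pos z) (Real.exp_pos z), mul_pos (mul_pos (Real.exp_pos z) (Real.exp_pos z)) (Real.exp_pos z)]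

lemma abs_mul_wfun_le (r t : ℝ) (hr : 0 < r) : |t| * wfun (r * t) ≤ 1 / r := by
  have h1 : |t| * wfun (r * t) ≤ |t| * Real.exp (-(r * |t|)) := by
    have := wfun_le_exp_neg_abs (r * t)
    rw [abs_mul, abs_of_pos hr] at this
    exact mul_le_mul_of_nonneg_left this (abs_nonneg t)
  refine h1.trans ?_
  set s := |t| with hs
  have hs0 : 0 ≤ s := abs_nonneg t
  have h2 : r * s ≤ Real.exp (r * s) := by linarith [Real.add_one_le_exp (r * s)]
  rw [le_div_iff₀ hr]
  have hE : Real.exp (-(r * s)) * Real.exp (r * s) = 1 := by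
    rw [← Real.exp_add]; simp
  nlinarith [Real.exp_pos (-(r * s)), Real.exp_pos (r * s)]

noncomputable def Kn {n p : ℕ} (X : Matrix (Fin n) (Fin p) ℝ) (i : Fin n) : ℝ :=
  ‖(WithLp.equiv 2 (Fin p → ℝ)).symm (fun l => X i l)‖

lemma Kn_nonneg {n p : ℕ} (X : Matrix (Fin n) (Fin p) ℝ) (i : Fin n) : 0 ≤ Kn X i :=
  norm_nonneg _

lemma key_bound (n p' : ℕ) (X : Matrix (Fin n) (Fin (p' + 1)) ℝ)
    (m : Fin n → ℝ) (hm : ∀ i, 0 ≤ m i) (r : ℝ) (hr : 0 < r)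
    (u : EuclideanSpace ℝ (Fin (p' + 1))) (hu : ‖u‖ = 1) :
    (X.transpose * Matrix.diagonal (fun i => m i * wfun (r * ∑ j, X i j * u j)) * X).det
      ≤ ((p' + 1).factorial : ℝ) * (∑ i, m i * Kn X i) * (∑ i, m i * Kn X i ^ 2) ^ p' / r := by
  classical
  set t : Fin n → ℝ := fun i => ∑ j, X i j * u j with ht
  set D : Fin n → ℝ := fun i => m i * wfun (r * t i) with hD
  set C1 : ℝ := ∑ i, m i * Kn X i with hC1
  set T : ℝ := ∑ i, m i * Kn X i ^ 2 with hT
  have hC1n : 0 ≤ C1 :=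
    Finset.sum_nonneg fun i _ => mul_nonneg (hm i) (Kn_nonneg X i)
  have hTn : 0 ≤ T :=
    Finset.sum_nonneg fun i _ => mul_nonneg (hm i) (pow_nonneg (Kn_nonneg X i) 2)
  -- orthonormal basis with b 0 = u
  have horth : Orthonormal ℝ
      (Set.restrict {(0 : Fin (p' + 1))} (fun _ => u)) := by
    constructor
    · intro i; exact hu
    · intro i j hij
      exact absurd (Subsingleton.elim i j) hij
  obtain ⟨b, hb⟩ := horth.exists_orthonormalBasis_extension_of_card_eq (by simp)
  have hb0 : b 0 = u := hb 0 rfl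
  set Q : Matrix (Fin (p' + 1)) (Fin (p' + 1)) ℝ := Matrix.of (fun j k => b k j) with hQdef
  have hQ1 : Q.transpose * Q = 1 := by
    ext j k
    have horth' := b.orthonormal
    rw [orthonormal_iff_ite] at horth'
    have h2 := horth' j k
    rw [PiLp.inner_apply] at h2
    simp only [RCLike.inner_apply, starRingEnd_apply, star_trivial] at h2
    simp only [Matrix.mul_apply, Matrix.transpose_apply, Matrix.one_apply, hQdef,
      Matrix.of_apply]
    rw [← h2]
    exact Finset.sum_congr rfl fun _ _ => mul_comm _ _
  have hdetQ : Q.det * Q.det = 1 := by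
    have := congrArg Matrix.det hQ1
    rwa [Matrix.det_mul, Matrix.det_transpose, Matrix.det_one] at this
  set A : Matrix (Fin (p' + 1)) (Fin (p' + 1)) ℝ := X.transpose * Matrix.diagonal D * X with hA
  set X' : Matrix (Fin n) (Fin (p' + 1)) ℝ := X * Q with hX'
  set B : Matrix (Fin (p' + 1)) (Fin (p' + 1)) ℝ := X'.transpose * Matrix.diagonal D * X'
    with hBdef
  have hdetAB : A.det = B.det := by
    have hBQ : B = Q.transpose * A * Q := by
      rw [hBdef, hX', Matrix.transpose_mul, hA]
      simp only [Matrix.mul_assoc]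
    rw [hBQ, Matrix.det_mul, Matrix.det_mul, Matrix.det_transpose]
    linear_combination (A.det) * hdetQ.symm
  -- entries
  have hBent : ∀ j k, B j k = ∑ i, X' i j * (D i * X' i k) := by
    intro j k
    rw [hBdef, Matrix.mul_assoc, Matrix.mul_apply]
    congr 1; ext i
    rw [Matrix.transpose_apply, Matrix.diagonal_mul]
  have hX'ent : ∀ i k, X' i k = ∑ l, X i l * b k l := by
    intro i k
    simp [hX', Matrix.mul_apply, hQdef]
  have hX'bd : ∀ i k, |X' i k| ≤ Kn X i := by
    intro i k
    rw [hX'ent]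
    have hinner : (∑ l, X i l * b k l)
        = (inner ℝ ((WithLp.equiv 2 (Fin (p' + 1) → ℝ)).symm (fun l => X i l)) (b k) : ℝ) := by
      rw [PiLp.inner_apply]
      simp [RCLike.inner_apply]
      exact Finset.sum_congr rfl fun _ _ => mul_comm _ _
    rw [hinner]
    calc |(inner ℝ ((WithLp.equiv 2 (Fin (p' + 1) → ℝ)).symm (fun l => X i l)) (b k) : ℝ)|
        ≤ ‖(WithLp.equiv 2 (Fin (p' + 1) → ℝ)).symm (fun l => X i l)‖ * ‖b k‖ :=
          abs_real_inner_le_norm _ _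
      _ = Kn X i := by rw [b.orthonormal.1 k, mul_one, Kn]
  have hX'0 : ∀ i, X' i 0 = t i := by
    intro i
    rw [hX'ent, hb0, ht]
  have hDabs : ∀ i, |D i| ≤ m i := by
    intro i
    rw [hD, abs_of_nonneg (mul_nonneg (hm i) (wfun_nonneg _))]
    calc m i * wfun (r * t i) ≤ m i * 1 :=
          mul_le_mul_of_nonneg_left (wfun_le_one _) (hm i)
      _ = m i := mul_one _
  have hBbd : ∀ j k, |B j k| ≤ T := by
    intro j k
    rw [hBent]
    refine (Finset.abs_sum_le_sum_abs _ _).trans ?_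
    rw [hT]
    refine Finset.sum_le_sum fun i _ => ?_
    rw [abs_mul, abs_mul]
    calc |X' i j| * (|D i| * |X' i k|)
        ≤ Kn X i * (m i * Kn X i) := by
          refine mul_le_mul (hX'bd i j) ?_ (by positivity) (Kn_nonneg X i)
          exact mul_le_mul (hDabs i) (hX'bd i k) (abs_nonneg _) (hm i)
      _ = m i * Kn X i ^ 2 := by ring
  have hB0 : ∀ j, |B j 0| ≤ C1 / r := by
    intro j
    rw [hBent]
    refine (Finset.abs_sum_le_sum_abs _ _).trans ?_
    rw [hC1, Finset.sum_div]
    refine Finset.sum_le_sum fun i _ => ?_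
    rw [abs_mul, abs_mul, hX'0]
    have h1 : |D i| * |t i| ≤ m i * (1 / r) := by
      rw [hD, abs_of_nonneg (mul_nonneg (hm i) (wfun_nonneg _)), mul_assoc]
      refine mul_le_mul_of_nonneg_left ?_ (hm i)
      calc wfun (r * t i) * |t i| = |t i| * wfun (r * t i) := mul_comm _ _
        _ ≤ 1 / r := abs_mul_wfun_le r (t i) hr
    calc |X' i j| * (|D i| * |t i|) ≤ Kn X i * (m i * (1 / r)) :=
          mul_le_mul (hX'bd i j) h1 (by positivity) (Kn_nonneg X i)
      _ = m i * Kn X i / r := by ring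
  -- determinant bound via Leibniz
  rw [hdetAB]
  have habs : B.det ≤ |B.det| := le_abs_self _
  refine habs.trans ?_
  rw [Matrix.det_apply]
  refine (Finset.abs_sum_le_sum_abs _ _).trans ?_
  have hterm : ∀ σ : Equiv.Perm (Fin (p' + 1)),
      |Equiv.Perm.sign σ • ∏ i, B (σ i) i| ≤ C1 / r * T ^ p' := by
    intro σ
    have hsmul : |Equiv.Perm.sign σ • ∏ i, B (σ i) i| = |∏ i, B (σ i) i| := by
      rcases Int.units_eq_one_or (Equiv.Perm.sign σ) with h | h <;>
        simp [h, Units.smul_def, abs_neg]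
    rw [hsmul, Finset.abs_prod, Fin.prod_univ_succ]
    refine mul_le_mul (hB0 (σ 0)) ?_ (Finset.prod_nonneg fun i _ => abs_nonneg _)
      (by positivity)
    calc (∏ i : Fin p', |B (σ i.succ) i.succ|) ≤ ∏ _i : Fin p', T :=
          Finset.prod_le_prod (fun i _ => abs_nonneg _) (fun i _ => hBbd _ _)
      _ = T ^ p' := by rw [Finset.prod_const, Finset.card_univ, Fintype.card_fin]
  refine (Finset.sum_le_sum fun σ _ => hterm σ).trans ?_
  rw [Finset.sum_const, Finset.card_univ, Fintype.card_perm, Fintype.card_fin,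
    nsmul_eq_mul]
  rw [div_eq_mul_inv, div_eq_mul_inv]
  ring_nf
  exact le_of_eq (by ring)

lemma det_nonneg_aux {n p : ℕ} (X : Matrix (Fin n) (Fin p) ℝ) (D : Fin n → ℝ)
    (hD : ∀ i, 0 ≤ D i) : 0 ≤ (X.transpose * Matrix.diagonal D * X).det := by
  classical
  set Y : Matrix (Fin n) (Fin p) ℝ := Matrix.diagonal (fun i => Real.sqrt (D i)) * X with hY
  have hsq : Matrix.diagonal (fun i => Real.sqrt (D i))
      * Matrix.diagonal (fun i => Real.sqrt (D i)) = Matrix.diagonal D := by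
    rw [Matrix.diagonal_mul_diagonal]
    exact congrArg Matrix.diagonal (funext fun i => Real.mul_self_sqrt (hD i))
  have hYY : Y.conjTranspose * Y = X.transpose * Matrix.diagonal D * X := by
    rw [hY, Matrix.conjTranspose_mul, Matrix.conjTranspose_eq_transpose_of_trivial,
      Matrix.conjTranspose_eq_transpose_of_trivial, Matrix.diagonal_transpose,
      Matrix.mul_assoc, ← Matrix.mul_assoc (Matrix.diagonal _), hsq, ← Matrix.mul_assoc]
  have hps := Matrix.posSemidef_conjTranspose_mul_self Y
  rw [hYY] at hps
  rw [hps.isHermitian.det_eq_prod_eigenvalues]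
  exact Finset.prod_nonneg fun i _ => by simpa using hps.eigenvalues_nonneg i

theorem stmt_4 (n p : ℕ) (X : Matrix (Fin n) (Fin p) ℝ)
    (hX : LinearIndependent ℝ (fun j : Fin p => (fun i => X i j : Fin n → ℝ)))
    (m : Fin n → ℝ) (hm : ∀ i, 0 < m i)
    (w : ℝ → ℝ) (hw : ∀ z, w z = Real.exp z / (1 + Real.exp z) ^ 2)
    (W : EuclideanSpace ℝ (Fin p) → Matrix (Fin n) (Fin n) ℝ)
    (hW : ∀ β, W β = Matrix.diagonal (fun i => w (∑ j, X i j * β j))) :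
    Filter.Tendsto
      (fun r : ℝ => ⨆ u : {u : EuclideanSpace ℝ (Fin p) // ‖u‖ = 1},
        (X.transpose * Matrix.diagonal m * W (r • (u : EuclideanSpace ℝ (Fin p))) * X).det)
      Filter.atTop (nhds 0) := by
  classical
  have hexpr : ∀ (r : ℝ) (u : EuclideanSpace ℝ (Fin p)),
      X.transpose * Matrix.diagonal m * W (r • u) * X
        = X.transpose * Matrix.diagonal (fun i => m i * wfun (r * ∑ j, X i j * u j)) * X := by
    intro r u
    rw [hW]
    have harg : (fun i => w (∑ j, X i j * (r • u) j))
        = fun i => wfun (r * ∑ j, X i j * u j) := by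
      funext i
      rw [hw]
      have : (∑ j, X i j * (r • u) j) = r * ∑ j, X i j * u j := by
        rw [Finset.mul_sum]
        refine Finset.sum_congr rfl fun j _ => ?_
        simp only [PiLp.smul_apply, smul_eq_mul]
        ring
      rw [this, wfun]
    rw [harg, Matrix.mul_assoc X.transpose (Matrix.diagonal m) (Matrix.diagonal _),
      Matrix.diagonal_mul_diagonal]
  cases p with
  | zero =>
    have hE : IsEmpty {u : EuclideanSpace ℝ (Fin 0) // ‖u‖ = 1} := by
      constructor
      rintro ⟨u, hu⟩
      have h0 : ‖u‖ = 0 := by simp [EuclideanSpace.norm_eq]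
      rw [h0] at hu
      norm_num at hu
    simp only [Real.iSup_of_isEmpty]
    exact tendsto_const_nhds
  | succ p' =>
    set C1 : ℝ := ∑ i, m i * Kn X i with hC1
    set T : ℝ := ∑ i, m i * Kn X i ^ 2 with hT
    set Kc : ℝ := ((p' + 1).factorial : ℝ) * C1 * T ^ p' with hKc
    haveI hne : Nonempty {u : EuclideanSpace ℝ (Fin (p' + 1)) // ‖u‖ = 1} :=
      ⟨⟨EuclideanSpace.single 0 1, by simp⟩⟩
    have hub : ∀ r : ℝ, 0 < r → ∀ u : {u : EuclideanSpace ℝ (Fin (p' + 1)) // ‖u‖ = 1},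
        (X.transpose * Matrix.diagonal m * W (r • (u : EuclideanSpace ℝ (Fin (p' + 1)))) * X).det
          ≤ Kc / r := by
      intro r hr u
      rw [hexpr r u]
      exact key_bound n p' X m (fun i => (hm i).le) r hr u u.2
    have hnn : ∀ (r : ℝ) (u : EuclideanSpace ℝ (Fin (p' + 1))),
        0 ≤ (X.transpose * Matrix.diagonal m * W (r • u) * X).det := by
      intro r u
      rw [hexpr r u]
      exact det_nonneg_aux X _ (fun i => mul_nonneg (hm i).le (wfun_nonneg _))
    have hK0 : Tendsto (fun r : ℝ => Kc / r) atTop (nhds 0) :=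
      tendsto_const_nhds.div_atTop tendsto_id
    refine tendsto_of_tendsto_of_tendsto_of_le_of_le' tendsto_const_nhds hK0 ?_ ?_
    · filter_upwards [Filter.eventually_gt_atTop (0 : ℝ)] with r hr
      obtain ⟨u0⟩ := hne
      have hbdd : BddAbove (Set.range fun u : {u : EuclideanSpace ℝ (Fin (p' + 1)) // ‖u‖ = 1} =>
          (X.transpose * Matrix.diagonal m * W (r • (u : EuclideanSpace ℝ (Fin (p' + 1)))) * X).det) := by
        refine ⟨Kc / r, ?_⟩
        rintro x ⟨u, rfl⟩
        exact hub r hr u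
      exact le_trans (hnn r u0) (le_ciSup hbdd u0)
    · filter_upwards [Filter.eventually_gt_atTop (0 : ℝ)] with r hr
      exact ciSup_le fun u => hub r hr u
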